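/- For every integer k ≥ 1, every μ > 0 and every x ≥ 0, |H_k(μx) - H_k(x)| ≤ |μ - 1| · K(k)^2 · max(1, μ^{-1}) · k^{1/2}. -/

import Mathlib

open MeasureTheory Real Filter Set

noncomputable section

/-- `Hcdf k` : the Gamma(k,1) distribution function. -/
def Hcdf (k : ℕ) (x : ℝ) : ℝ :=
  ∫ t in (0:ℝ)..x, t ^ (k - 1) * Real.exp (-t) / (Nat.factorial (k - 1))

/-- `Kconst k = (k^{k+1/2} e^{-k}/k!)^{1/2}`. -/
def Kconst (k : ℕ) : ℝ :=
  Real.sqrt ((k : ℝ) ^ ((k : ℝ) + 1 / 2) * Real.exp (-(k : ℝ)) / (Nat.factorial k))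

lemma pow_mul_exp_le (k : ℕ) (hk : 1 ≤ k) (t : ℝ) (ht : 0 ≤ t) :
    t ^ k * Real.exp (-t) ≤ (k : ℝ) ^ k * Real.exp (-(k : ℝ)) := by
  have hk0 : (0:ℝ) < k := by exact_mod_cast Nat.lt_of_lt_of_le Nat.zero_lt_one hk
  have h1 : t / k ≤ Real.exp (t / k - 1) := by
    have := Real.add_one_le_exp (t / k - 1); linarith
  have h2 : (t / k) ^ k ≤ Real.exp (t / k - 1) ^ k :=
    pow_le_pow_left₀ (by positivity) h1 k
  have hek : Real.exp (t / k - 1) ^ k = Real.exp (t - k) := by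
    rw [← Real.exp_nat_mul]
    congr 1
    field_simp
  rw [hek, div_pow, div_le_iff₀ (by positivity)] at h2
  calc t ^ k * Real.exp (-t) ≤ Real.exp (t - k) * (k:ℝ) ^ k * Real.exp (-t) := by
        apply mul_le_mul_of_nonneg_right h2 (Real.exp_nonneg _)
    _ = (k : ℝ) ^ k * Real.exp (-(k : ℝ)) := by
        rw [Real.exp_sub, Real.exp_neg, Real.exp_neg]
        field_simp

lemma Kconst_sq_mul_sqrt (k : ℕ) (hk : 1 ≤ k) :
    Kconst k ^ 2 * Real.sqrt k =
      (k : ℝ) ^ k * Real.exp (-(k : ℝ)) / (Nat.factorial (k - 1)) := by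
  have hk0 : (0:ℝ) < k := by exact_mod_cast Nat.lt_of_lt_of_le Nat.zero_lt_one hk
  have hA : (0:ℝ) ≤ (k : ℝ) ^ ((k : ℝ) + 1 / 2) * Real.exp (-(k : ℝ)) / (Nat.factorial k) := by
    positivity
  rw [Kconst, Real.sq_sqrt hA]
  have h1 : (k : ℝ) ^ ((k : ℝ) + 1 / 2) = (k : ℝ) ^ k * Real.sqrt k := by
    rw [Real.rpow_add hk0, Real.rpow_natCast, ← Real.sqrt_eq_rpow]
  have hfac : (Nat.factorial k : ℝ) = k * (Nat.factorial (k - 1)) := by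
    have : k = (k - 1) + 1 := (Nat.succ_pred_eq_of_pos hk).symm
    rw [this, Nat.factorial_succ]
    push_cast [Nat.succ_pred_eq_of_pos hk]
    ring_nf
  rw [h1, hfac]
  have hs : Real.sqrt k * Real.sqrt k = (k : ℝ) := Real.mul_self_sqrt hk0.le
  have hfacpos : (0:ℝ) < (Nat.factorial (k-1) : ℝ) := by exact_mod_cast (Nat.factorial_pos _)
  field_simp
  ring_nf
  rw [Real.sq_sqrt hk0.le]

/-- For every integer `k ≥ 1`, every `μ > 0` and every `x ≥ 0`,
`|H_k(μx) - H_k(x)| ≤ |μ - 1| · K(k)² · max(1, μ⁻¹) · √k`. -/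
theorem abs_Hcdf_scale_sub_le (k : ℕ) (hk : 1 ≤ k) (m : ℝ) (hm : 0 < m) (x : ℝ)
    (hx : 0 ≤ x) :
    |Hcdf k (m * x) - Hcdf k x| ≤ |m - 1| * Kconst k ^ 2 * max 1 m⁻¹ * Real.sqrt k := by
  have hk0 : (0:ℝ) < k := by exact_mod_cast Nat.lt_of_lt_of_le Nat.zero_lt_one hk
  rcases eq_or_lt_of_le hx with hx0 | hx0
  · rw [← hx0, mul_zero, sub_self, abs_zero]
    positivity
  -- main case x > 0
  set f : ℝ → ℝ := fun t => t ^ (k - 1) * Real.exp (-t) / (Nat.factorial (k - 1)) with hf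
  have hcont : Continuous f := by
    apply Continuous.div_const
    exact (continuous_pow _).mul (Real.continuous_exp.comp continuous_neg)
  have hdiff : Hcdf k (m * x) - Hcdf k x = ∫ t in x..(m * x), f t := by
    rw [Hcdf, Hcdf]
    exact intervalIntegral.integral_interval_sub_left
      (hcont.intervalIntegrable _ _) (hcont.intervalIntegrable _ _)
  set c : ℝ := (k : ℝ) ^ k * Real.exp (-(k : ℝ)) / (Nat.factorial (k - 1)) with hc
  have hcpos : 0 < c := by positivity
  have hminpos : 0 < min x (m * x) := lt_min hx0 (by positivity)
  set C : ℝ := c * max 1 m⁻¹ / x with hC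
  have hfacpos : (0:ℝ) < (Nat.factorial (k - 1) : ℝ) := by
    exact_mod_cast Nat.factorial_pos _
  have hCeq : C = c / min x (m * x) := by
    rcases le_total m 1 with h | h
    · rw [hC, max_eq_right ((one_le_inv₀ hm).mpr h), min_eq_right (by nlinarith)]
      field_simp
    · rw [hC, max_eq_left (by simpa using inv_le_one_of_one_le₀ h), min_eq_left (by nlinarith), mul_one]
  have hbound : ∀ t ∈ Set.uIoc x (m * x), ‖f t‖ ≤ C := by
    intro t ht
    have htpos : 0 < t := lt_of_le_of_lt hminpos.le ht.1
    have hft : 0 ≤ f t := by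
      rw [hf]; positivity
    rw [Real.norm_eq_abs, abs_of_nonneg hft]
    have h1 : f t ≤ c / t := by
      rw [le_div_iff₀ htpos, hf, hc]
      have hkk : k - 1 + 1 = k := Nat.succ_pred_eq_of_pos hk
      have hp : t ^ (k - 1) * t = t ^ k := by
        rw [← pow_succ, hkk]
      have heq : t ^ (k - 1) * Real.exp (-t) / ↑(Nat.factorial (k - 1)) * t
          = t ^ k * Real.exp (-t) / ↑(Nat.factorial (k - 1)) := by
        rw [div_mul_eq_mul_div]
        congr 1
        rw [mul_right_comm, hp]
      rw [heq]
      exact (div_le_div_iff_of_pos_right hfacpos).mpr (pow_mul_exp_le k hk t htpos.le)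
    have h2 : c / t ≤ c / min x (m * x) :=
      div_le_div_of_nonneg_left hcpos.le hminpos ht.1.le
    rw [hCeq]
    exact h1.trans h2
  have hnorm := intervalIntegral.norm_integral_le_of_norm_le_const hbound
  rw [hdiff, ← Real.norm_eq_abs]
  have habs : |m * x - x| = |m - 1| * x := by
    have h : m * x - x = (m - 1) * x := by ring
    rw [h, abs_mul, abs_of_nonneg hx]
  calc ‖∫ t in x..(m*x), f t‖ ≤ C * |m * x - x| := hnorm
    _ = |m - 1| * c * max 1 m⁻¹ := by
        rw [hC, habs]; field_simp
    _ = |m - 1| * Kconst k ^ 2 * max 1 m⁻¹ * Real.sqrt k := by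
        rw [hc, ← Kconst_sq_mul_sqrt k hk]; ring
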